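/- Let λ: R → S and λ': R → S' be ring epimorphisms of commutative rings with essential images of restriction of scalars X and X' in Mod R. Then an R-module lies in the essential image of restriction of scalars along the composite R → S ⊗_R S' if and only if it lies in both X and X', i.e. its R-module structure extends both to an S-module structure and to an S'-module structure. -/

import Mathlib

open TensorProduct

universe u

/-- A ring homomorphism is an epimorphism in the category of rings. -/
def IsRingEpi {R S : Type u} [Ring R] [Ring S] (f : R →+* S) : Prop :=
  ∀ ⦃T : Type u⦄ [Ring T], ∀ g h : S →+* T, g.comp f = h.comp f → g = h

/-- An `R`-module `X` lies in the essential image of restriction of scalars along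
`f : R →+* S` iff its `R`-action extends to an `S`-action compatible with `f`. -/
def ExtendsAlong {R S : Type u} [Ring R] [Ring S] (f : R →+* S)
    (X : Type u) [AddCommGroup X] [Module R X] : Prop :=
  ∃ m : Module S X, ∀ (r : R) (x : X), (letI : Module S X := m; f r • x) = r • x

/-- For an epimorphism `R → S`, `s ⊗ 1 = 1 ⊗ s` in `S ⊗[R] S`. -/
theorem epi_tmul_one_eq {R S : Type u} [CommRing R] [CommRing S] [Algebra R S]
    (hepi : IsRingEpi (algebraMap R S)) (s : S) :
    (s ⊗ₜ[R] (1 : S) : S ⊗[R] S) = 1 ⊗ₜ s := by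
  have h : Algebra.TensorProduct.includeLeftRingHom
      = (Algebra.TensorProduct.includeRight : S →ₐ[R] S ⊗[R] S).toRingHom := by
    apply hepi
    ext r
    simp
  exact RingHom.congr_fun h s

/-- Any `R`-linear map between `S`-modules is `S`-linear when `R → S` is an epimorphism. -/
theorem epi_smul_comm {R S : Type u} [CommRing R] [CommRing S] [Algebra R S]
    (hepi : IsRingEpi (algebraMap R S))
    {X Y : Type u} [AddCommGroup X] [Module S X] [AddCommGroup Y] [Module S Y]
    [Module R X] [Module R Y] [IsScalarTower R S X] [IsScalarTower R S Y]
    (φ : X →ₗ[R] Y) (s : S) (x : X) : φ (s • x) = s • φ x := by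
  let b : S →ₗ[R] S →ₗ[R] Y := LinearMap.mk₂ R (fun a t => a • φ (t • x))
    (fun a₁ a₂ t => by simp [add_smul])
    (fun r a t => by simp [smul_assoc])
    (fun a t₁ t₂ => by simp [add_smul])
    (fun r a t => by rw [smul_assoc, map_smul, smul_comm r a])
  have := congrArg (TensorProduct.lift b) (epi_tmul_one_eq hepi s)
  simpa [b] using this.symm

theorem essImage_pushout_eq_inter {R S S' : Type u} [CommRing R] [CommRing S] [CommRing S']
    [Algebra R S] [Algebra R S']
    (hepi : IsRingEpi (algebraMap R S)) (hepi' : IsRingEpi (algebraMap R S')) :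
    ∀ (X : Type u) [AddCommGroup X] [Module R X],
      ExtendsAlong (algebraMap R (S ⊗[R] S')) X ↔
        (ExtendsAlong (algebraMap R S) X ∧ ExtendsAlong (algebraMap R S') X) := by
  intro X _ _
  constructor
  · rintro ⟨m, hm⟩
    constructor
    · refine ⟨letI := m; Module.compHom X (Algebra.TensorProduct.includeLeftRingHom (R := R) (A := S) (B := S')), ?_⟩
      intro r x
      letI := m
      show ((algebraMap R S r) ⊗ₜ[R] (1 : S') : S ⊗[R] S') • x = r • x
      rw [← Algebra.TensorProduct.algebraMap_apply]
      exact hm r x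
    · refine ⟨letI := m;
        Module.compHom X (Algebra.TensorProduct.includeRight : S' →ₐ[R] S ⊗[R] S').toRingHom, ?_⟩
      intro r x
      letI := m
      show ((1 : S) ⊗ₜ[R] (algebraMap R S' r) : S ⊗[R] S') • x = r • x
      rw [← Algebra.TensorProduct.algebraMap_apply']
      exact hm r x
  · rintro ⟨⟨mS, hmS⟩, ⟨mS', hmS'⟩⟩
    letI := mS
    letI := mS'
    haveI tS : IsScalarTower R S X := ⟨fun r s x => by
      rw [Algebra.smul_def, mul_smul, hmS]⟩
    haveI tS' : IsScalarTower R S' X := ⟨fun r s x => by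
      rw [Algebra.smul_def, mul_smul, hmS']⟩
    haveI : SMulCommClass S S' X := by
      constructor
      intro s s' x
      let φ : X →ₗ[R] X :=
        { toFun := fun x => s' • x
          map_add' := fun a b => smul_add s' a b
          map_smul' := fun r a => by
            simp only [RingHom.id_apply]
            rw [← hmS' r a, ← hmS' r (s' • a), ← mul_smul, ← mul_smul, mul_comm] }
      exact (epi_smul_comm hepi φ s x).symm
    refine ⟨TensorProduct.Algebra.module, ?_⟩
    intro r x
    letI := TensorProduct.Algebra.module (R := R) (A := S) (B := S') (M := X)
    show (algebraMap R (S ⊗[R] S') r) • x = r • x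
    rw [Algebra.TensorProduct.algebraMap_apply]
    rw [TensorProduct.Algebra.smul_def, one_smul]
    exact hmS r x
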